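/- Let T be a weighted tree, ρ > 0, and let x be a vertex whose neighbors are u_1, …, u_h, ordered so that w(x,u_k) + b_time(u_k, B(u_k,x)) is nonincreasing in k. Then contacting the neighbors in the order u_1, u_2, …, u_h minimizes the broadcast time of x, and b_time(x, T) = max over 1 ≤ k ≤ h of (k·ρ + w(x,u_k) + b_time(u_k, B(u_k,x))). -/

import Mathlib

/-!
Common definitions for the postal-model broadcasting problem on weighted trees.
-/

open SimpleGraph

namespace Postal

attribute [local instance] Classical.propDecidable

variable {V : Type*} [Fintype V] [DecidableEq V] (G : SimpleGraph V)

/-- The unique path (as a walk) between two vertices of a tree. -/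
noncomputable def tPath (hG : G.IsTree) (u v : V) : G.Walk u v :=
  (hG.existsUnique_path u v).exists.choose

/-- `z` lies in the open branch `O(x,y)`: the component of `T - x` containing `y`. -/
def inO (x y z : V) : Prop := ∃ p : G.Walk y z, x ∉ p.support

/-- The open branch `O(x,y)`. -/
def Obr (x y : V) : Set V := {z | inO G x y z}

/-- The closed branch `B(x,y) = T - O(x,y)` (it contains `x`). -/
def Bbr (x y : V) : Set V := {z | ¬ inO G x y z}

/-- The parent of `z` with respect to the root `u`: the penultimate vertex on the
unique `u`-to-`z` path. -/
noncomputable def parent (hG : G.IsTree) (u z : V) : V :=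
  (tPath G hG u z).getVert ((tPath G hG u z).length - 1)

/-- The receive time of `z` under schedule `σ` when `u` originates the message:
along the unique `u`-to-`z` path, each vertex is contacted in its slot `σ`,
contributing `σ·ρ` connection time plus the edge weight. -/
noncomputable def recvTime (hG : G.IsTree) (w : V → V → ℝ) (ρ : ℝ) (σ : V → ℕ) (u z : V) : ℝ :=
  ((tPath G hG u z).darts.map (fun d => (σ d.toProd.2 : ℝ) * ρ + w d.toProd.1 d.toProd.2)).sum

/-- A schedule `σ` is valid for source `u` broadcasting over the vertex set `S`:
every non-source vertex gets a slot `≥ 1`, and distinct vertices with the same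
parent get distinct slots (a sender contacts its neighbors sequentially). -/
def Valid (hG : G.IsTree) (σ : V → ℕ) (u : V) (S : Set V) : Prop :=
  (∀ z ∈ S, z ≠ u → 1 ≤ σ z) ∧
  (∀ z₁ ∈ S, ∀ z₂ ∈ S, z₁ ≠ u → z₂ ≠ u → z₁ ≠ z₂ →
    parent G hG u z₁ = parent G hG u z₂ → σ z₁ ≠ σ z₂)

/-- The minimum broadcast time for `u` to broadcast a message over the subtree
induced by `S` under the postal model with latency `ρ`. -/
noncomputable def bTime (hG : G.IsTree) (w : V → V → ℝ) (ρ : ℝ) (u : V) (S : Set V) : ℝ :=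
  sInf {m | ∃ σ, Valid G hG σ u S ∧ m = sSup ((recvTime G hG w ρ σ u) '' S)}

/-- Broadcast time over the whole tree. -/
noncomputable def bTimeT (hG : G.IsTree) (w : V → V → ℝ) (ρ : ℝ) (u : V) : ℝ :=
  bTime G hG w ρ u Set.univ

/-- The set of broadcast centers. -/
def BCtr (hG : G.IsTree) (w : V → V → ℝ) (ρ : ℝ) : Set V :=
  {u | ∀ v, bTimeT G hG w ρ u ≤ bTimeT G hG w ρ v}

/-- A prime broadcast center. -/
def IsPrime (hG : G.IsTree) (w : V → V → ℝ) (ρ : ℝ) (κ : V) : Prop :=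
  κ ∈ BCtr G hG w ρ ∧
  ∀ u, G.Adj κ u → bTime G hG w ρ u (Bbr G u κ) ≤ bTime G hG w ρ κ (Bbr G κ u)

/-- Hop distance: number of edges on the unique path. -/
noncomputable def hop (hG : G.IsTree) (x y : V) : ℕ := (tPath G hG x y).length

/-- Total weight of the unique `x`-to-`y` path. -/
noncomputable def pw (hG : G.IsTree) (w : V → V → ℝ) (x y : V) : ℝ :=
  ((tPath G hG x y).darts.map (fun d => w d.toProd.1 d.toProd.2)).sum

/-- Symmetric weight function. -/
def Wsymm (w : V → V → ℝ) : Prop := ∀ a b, w a b = w b a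

/-- Positive weights on edges. -/
def Wpos (w : V → V → ℝ) : Prop := ∀ a b, G.Adj a b → 0 < w a b

/-- A scenario: a symmetric weight assignment within the uncertainty intervals. -/
def Scenario (lo hi : V → V → ℝ) (w : V → V → ℝ) : Prop :=
  (∀ a b, w a b = w b a) ∧ ∀ a b, G.Adj a b → lo a b ≤ w a b ∧ w a b ≤ hi a b

/-- The maximum regret of `x`. -/
noncomputable def maxRegret (hG : G.IsTree) (lo hi : V → V → ℝ) (ρ : ℝ) (x : V) : ℝ :=
  sSup {r | ∃ w y, Scenario G lo hi w ∧ r = bTimeT G hG w ρ x - bTimeT G hG w ρ y}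

/-- `w` is a worst-case scenario of the tree with respect to `x`. -/
def WorstCase (hG : G.IsTree) (lo hi : V → V → ℝ) (ρ : ℝ) (x : V) (w : V → V → ℝ) : Prop :=
  Scenario G lo hi w ∧
  ∃ y, bTimeT G hG w ρ x - bTimeT G hG w ρ y = maxRegret G hG lo hi ρ x

/-- An edge `(a,b)` lies on the unique `x`-to-`y` path. -/
def onPath (hG : G.IsTree) (x y a b : V) : Prop :=
  a ∈ (tPath G hG x y).support ∧ b ∈ (tPath G hG x y).support

/-- The base scenario `α_{x,y}`: weight `hi` on the `x`-to-`y` path and on edges of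
`B(y,x)`, weight `lo` elsewhere. -/
noncomputable def baseScenario (hG : G.IsTree) (lo hi : V → V → ℝ) (x y : V) : V → V → ℝ :=
  fun a b =>
    if onPath G hG x y a b ∨ (a ∈ Bbr G y x ∧ b ∈ Bbr G y x) then hi a b else lo a b

/-- The value `w(y,v) + b_time(v, B(v,y))` of a neighbor `v` of `y`. -/
noncomputable def nval (hG : G.IsTree) (w : V → V → ℝ) (ρ : ℝ) (y v : V) : ℝ :=
  w y v + bTime G hG w ρ v (Bbr G v y)

/-- Scenario `β^j_{x,y}`: agrees with `α_{x,y}`, except that every edge in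
`{(y,u_k)} ∪ E(B(u_k,y))` for `k > j` (with `u` the 1-based sorted enumeration
of the neighbors of `y` in `B(y,x)`) gets weight `lo`. -/
noncomputable def betaScenario (hG : G.IsTree) (lo hi : V → V → ℝ) (x y : V) {h : ℕ}
    (u : Fin h → V) (j : ℕ) : V → V → ℝ :=
  fun a b =>
    if ∃ k : Fin h, j < (k : ℕ) + 1 ∧
        ((a = y ∧ b = u k) ∨ (b = y ∧ a = u k) ∨
          (a ∈ Bbr G (u k) y ∧ b ∈ Bbr G (u k) y)) then
      lo a b
    else baseScenario G hG lo hi x y a b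

/-- Scenario `γ^j_{x,y}`: agrees with `α_{x,y}` on the edges in
`⋃_{1 ≤ k ≤ j} ({(y,u_k)} ∪ E(B(u_k,y)))` and with the scenario `s` elsewhere. -/
noncomputable def gammaScenario (hG : G.IsTree) (lo hi : V → V → ℝ) (s : V → V → ℝ)
    (x y : V) {h : ℕ} (u : Fin h → V) (j : ℕ) : V → V → ℝ :=
  fun a b =>
    if ∃ k : Fin h, (k : ℕ) + 1 ≤ j ∧
        ((a = y ∧ b = u k) ∨ (b = y ∧ a = u k) ∨
          (a ∈ Bbr G (u k) y ∧ b ∈ Bbr G (u k) y)) then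
      baseScenario G hG lo hi x y a b
    else s a b

/-- The set of neighbors of `y` inside the branch `B(y,x)`. -/
def nbrIn (x y : V) : Set V := {v | G.Adj y v ∧ v ∈ Bbr G y x}


/-! ### Auxiliary lemmas -/

set_option linter.unusedSectionVars false

section Aux
variable {G} (hG : G.IsTree)
include hG

lemma tPath_isPath (u v : V) : (tPath G hG u v).IsPath :=
  (hG.existsUnique_path u v).exists.choose_spec

lemma tPath_eq {u v : V} (p : G.Walk u v) (hp : p.IsPath) : tPath G hG u v = p :=
  ((hG.existsUnique_path u v).unique (tPath_isPath hG u v) hp)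

lemma tPath_self (u : V) : tPath G hG u u = Walk.nil :=
  tPath_eq hG _ (Walk.IsPath.nil)

lemma tPath_support_subset {u v : V} (p : G.Walk u v) :
    (tPath G hG u v).support ⊆ p.support := by
  rw [tPath_eq hG p.bypass p.bypass_isPath]
  exact p.support_bypass_subset

lemma mem_Bbr_iff {x y z : V} : z ∈ Bbr G y x ↔ y ∈ (tPath G hG x z).support := by
  constructor
  · intro hz
    by_contra hy
    exact hz ⟨tPath G hG x z, hy⟩
  · rintro hy ⟨p, hp⟩
    exact hp (tPath_support_subset hG p hy)

lemma not_x_mem_Bbr {x s : V} (ha : G.Adj x s) : x ∉ Bbr G s x := by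
  intro h
  exact h ⟨Walk.nil, by simp [Walk.support_nil]; exact (G.ne_of_adj ha).symm⟩

/-- Key structural lemma: if `z` lies in the branch `B(s,x)` of a neighbor `s` of `x`,
then the unique `x`–`z` path starts with the edge `x`–`s` followed by the `s`–`z` path,
which avoids `x`. -/
lemma tPath_cons {x s z : V} (ha : G.Adj x s) (hz : z ∈ Bbr G s x) :
    tPath G hG x z = Walk.cons ha (tPath G hG s z) ∧ x ∉ (tPath G hG s z).support := by
  have hzx : z ≠ x := fun h => not_x_mem_Bbr hG ha (h ▸ hz)
  obtain ⟨s', h', q, hq⟩ := Walk.exists_eq_cons_of_ne (Ne.symm hzx) (tPath G hG x z)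
  have hqpath : (Walk.cons h' q).IsPath := hq ▸ tPath_isPath hG x z
  have hqp : q.IsPath := hqpath.of_cons
  have hxq : x ∉ q.support := by
    intro hx; exact ((Walk.cons_isPath_iff h' q).1 hqpath).2 hx
  have hs : s ∈ (Walk.cons h' q).support := by
    rw [← hq]; exact (mem_Bbr_iff hG).1 hz
  have hss' : s = s' := by
    rw [Walk.support_cons, List.mem_cons] at hs
    rcases hs with h | h
    · exact absurd h (Ne.symm (G.ne_of_adj ha))
    · -- s ∈ q.support; prefix argument
      have hpre : (Walk.cons h' (q.takeUntil s h)).IsPath := by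
        rw [Walk.cons_isPath_iff]
        exact ⟨hqp.takeUntil h, fun hx => hxq (q.support_takeUntil_subset h hx)⟩
      have h1 : tPath G hG x s = Walk.cons h' (q.takeUntil s h) := tPath_eq hG _ hpre
      have h2 : tPath G hG x s = Walk.cons ha Walk.nil := by
        apply tPath_eq hG
        simp [Walk.cons_isPath_iff]
        exact (G.ne_of_adj ha)
      have hlen : (Walk.cons h' (q.takeUntil s h)).length = (Walk.cons ha (Walk.nil : G.Walk s s)).length := by
        rw [← h1, h2]
      simp only [Walk.length_cons, Walk.length_nil, Nat.add_right_cancel_iff] at hlen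
      exact (Walk.eq_of_length_eq_zero hlen).symm
  subst hss'
  have : q = tPath G hG s z := (tPath_eq hG q hqp).symm
  subst this
  refine ⟨?_, hxq⟩
  rw [hq]

lemma mem_Bbr_self {x s : V} (ha : G.Adj x s) : s ∈ Bbr G s x := by
  rw [mem_Bbr_iff hG]
  have : tPath G hG x s = Walk.cons ha Walk.nil := by
    apply tPath_eq hG
    simp [Walk.cons_isPath_iff]
    exact (G.ne_of_adj ha)
  rw [this]; simp

/-- Every vertex `t` on the `s`–`z` path (for `z ∈ B(s,x)`) lies in `B(s,x)`. -/
lemma support_subset_Bbr {x s z : V} (ha : G.Adj x s) (hz : z ∈ Bbr G s x) :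
    ∀ t ∈ (tPath G hG s z).support, t ∈ Bbr G s x := by
  intro t ht
  obtain ⟨hcons, hxq⟩ := tPath_cons hG ha hz
  have hqp : (tPath G hG s z).IsPath := tPath_isPath hG s z
  have hpre : (Walk.cons ha ((tPath G hG s z).takeUntil t ht)).IsPath := by
    rw [Walk.cons_isPath_iff]
    exact ⟨hqp.takeUntil ht, fun hx => hxq ((tPath G hG s z).support_takeUntil_subset ht hx)⟩
  have h1 : tPath G hG x t = Walk.cons ha ((tPath G hG s z).takeUntil t ht) := tPath_eq hG _ hpre
  rw [mem_Bbr_iff hG, h1, Walk.support_cons]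
  exact List.mem_cons_of_mem _ (Walk.start_mem_support _)

/-- Branches of distinct neighbors are disjoint. -/
lemma Bbr_disjoint {x s t z : V} (ha : G.Adj x s) (hb : G.Adj x t) (hst : s ≠ t)
    (hz : z ∈ Bbr G s x) : z ∉ Bbr G t x := by
  intro hzt
  obtain ⟨hconss, hxs⟩ := tPath_cons hG ha hz
  obtain ⟨hconst, hxt⟩ := tPath_cons hG hb hzt
  have := hconss ▸ hconst
  have hlen := congrArg Walk.length this
  have hget := congrArg (fun w => Walk.getVert w 1) this
  simp only [Walk.getVert_cons_succ, Walk.getVert_zero] at hget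
  exact hst hget

/-- Every vertex other than `x` lies in some neighbor's branch. -/
lemma exists_mem_Bbr {x z : V} (hz : z ≠ x) : ∃ s, G.Adj x s ∧ z ∈ Bbr G s x := by
  obtain ⟨s, h', q, hq⟩ := Walk.exists_eq_cons_of_ne (Ne.symm hz) (tPath G hG x z)
  refine ⟨s, h', ?_⟩
  rw [mem_Bbr_iff hG, hq, Walk.support_cons]
  exact List.mem_cons_of_mem _ (Walk.start_mem_support _)

lemma recvTime_self (w : V → V → ℝ) (ρ : ℝ) (σ : V → ℕ) (u : V) :
    recvTime G hG w ρ σ u u = 0 := by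
  unfold recvTime
  rw [tPath_self hG]
  simp

lemma recvTime_cons {x s z : V} (w : V → V → ℝ) (ρ : ℝ) (σ : V → ℕ)
    (ha : G.Adj x s) (hz : z ∈ Bbr G s x) :
    recvTime G hG w ρ σ x z = (σ s : ℝ) * ρ + w x s + recvTime G hG w ρ σ s z := by
  unfold recvTime
  rw [(tPath_cons hG ha hz).1, Walk.darts_cons]
  simp [add_assoc]

lemma parent_of_adj {x s : V} (ha : G.Adj x s) : parent G hG x s = x := by
  unfold parent
  have h2 : tPath G hG x s = Walk.cons ha Walk.nil := by
    apply tPath_eq hG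
    simp [Walk.cons_isPath_iff]
    exact (G.ne_of_adj ha)
  rw [h2]
  simp [Walk.length_cons]

lemma parent_eq_of_mem {x s z : V} (ha : G.Adj x s) (hz : z ∈ Bbr G s x) (hzs : z ≠ s) :
    parent G hG x z = parent G hG s z := by
  unfold parent
  obtain ⟨hcons, _⟩ := tPath_cons hG ha hz
  obtain ⟨m, hm⟩ : ∃ m, (tPath G hG s z).length = m + 1 := by
    cases hq : (tPath G hG s z).length with
    | zero => exact absurd (Walk.eq_of_length_eq_zero hq) (Ne.symm hzs)
    | succ m => exact ⟨m, rfl⟩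
  rw [hcons]
  simp only [Walk.length_cons, hm, Nat.add_sub_cancel]
  rw [Walk.getVert_cons_succ]

lemma parent_mem_Bbr {x s z : V} (ha : G.Adj x s) (hz : z ∈ Bbr G s x) :
    parent G hG s z ∈ Bbr G s x := by
  apply support_subset_Bbr hG ha hz
  rw [Walk.mem_support_iff_exists_getVert]
  exact ⟨_, rfl, Nat.sub_le _ _⟩

/-- A schedule valid for `x` over `univ` is valid for a neighbor `s` over its branch. -/
lemma Valid_restrict {x s : V} (σ : V → ℕ) (ha : G.Adj x s)
    (hv : Valid G hG σ x Set.univ) : Valid G hG σ s (Bbr G s x) := by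
  obtain ⟨hv1, hv2⟩ := hv
  constructor
  · intro z hz hzs
    exact hv1 z trivial (fun h => not_x_mem_Bbr hG ha (h ▸ hz))
  · intro z₁ hz₁ z₂ hz₂ h₁ h₂ hne hpar
    refine hv2 z₁ trivial z₂ trivial
      (fun h => not_x_mem_Bbr hG ha (h ▸ hz₁))
      (fun h => not_x_mem_Bbr hG ha (h ▸ hz₂)) hne ?_
    rw [parent_eq_of_mem hG ha hz₁ h₁, parent_eq_of_mem hG ha hz₂ h₂, hpar]

/-- There is always at least one valid schedule. -/
lemma valid_exists (u : V) (S : Set V) :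
    Valid G hG (fun z => (Fintype.equivFin V z : ℕ) + 1) u S := by
  constructor
  · intro z _ _; exact Nat.le_add_left 1 _
  · intro z₁ _ z₂ _ _ _ hne _ h
    simp only [Nat.add_right_cancel_iff] at h
    exact hne (((Fintype.equivFin V).injective (Fin.val_injective h)))

lemma recv_image_finite (w : V → V → ℝ) (ρ : ℝ) (σ : V → ℕ) (u : V) (S : Set V) :
    ((recvTime G hG w ρ σ u) '' S).Finite := Set.toFinite _

/-- Any element of the `bTime` defining set is nonnegative, provided `u ∈ S`. -/
lemma bTime_set_nonneg (w : V → V → ℝ) (ρ : ℝ) (u : V) (S : Set V) (hu : u ∈ S)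
    {m : ℝ} (hm : ∃ σ, Valid G hG σ u S ∧
      m = sSup ((recvTime G hG w ρ σ u) '' S)) : 0 ≤ m := by
  obtain ⟨σ, _, rfl⟩ := hm
  have h0 : (0:ℝ) ∈ (recvTime G hG w ρ σ u) '' S :=
    ⟨u, hu, recvTime_self hG w ρ σ u⟩
  exact le_csSup ((recv_image_finite hG w ρ σ u S).bddAbove) h0

lemma bTime_nonneg (w : V → V → ℝ) (ρ : ℝ) (u : V) (S : Set V) (hu : u ∈ S) :
    0 ≤ bTime G hG w ρ u S := by
  apply le_csInf
  · exact ⟨_, ⟨_, valid_exists hG u S, rfl⟩⟩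
  · intro m hm
    exact bTime_set_nonneg hG w ρ u S hu hm

lemma bTime_le (w : V → V → ℝ) (ρ : ℝ) {σ : V → ℕ} {u : V} {S : Set V} (hu : u ∈ S)
    (hv : Valid G hG σ u S) :
    bTime G hG w ρ u S ≤ sSup ((recvTime G hG w ρ σ u) '' S) := by
  apply csInf_le
  · exact ⟨0, fun m hm => bTime_set_nonneg hG w ρ u S hu hm⟩
  · exact ⟨σ, hv, rfl⟩

lemma bTime_approx (w : V → V → ℝ) (ρ : ℝ) (u : V) (S : Set V) (hu : u ∈ S)
    {ε : ℝ} (hε : 0 < ε) :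
    ∃ σ, Valid G hG σ u S ∧
      sSup ((recvTime G hG w ρ σ u) '' S) < bTime G hG w ρ u S + ε := by
  have hne : {m | ∃ σ, Valid G hG σ u S ∧
      m = sSup ((recvTime G hG w ρ σ u) '' S)}.Nonempty :=
    ⟨_, ⟨_, valid_exists hG u S, rfl⟩⟩
  have hbdd : BddBelow {m | ∃ σ, Valid G hG σ u S ∧
      m = sSup ((recvTime G hG w ρ σ u) '' S)} :=
    ⟨0, fun m hm => bTime_set_nonneg hG w ρ u S hu hm⟩
  have : bTime G hG w ρ u S < bTime G hG w ρ u S + ε := by linarith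
  obtain ⟨m, ⟨σ, hσ, rfl⟩, hlt⟩ := (csInf_lt_iff hbdd hne).1 this
  exact ⟨σ, hσ, hlt⟩

/-- `recvTime` only depends on the slot values on the tail of the path. -/
lemma recvTime_congr {u z : V} (w : V → V → ℝ) (ρ : ℝ) (σ σ' : V → ℕ)
    (hσ : ∀ t ∈ (tPath G hG u z).support.tail, σ t = σ' t) :
    recvTime G hG w ρ σ u z = recvTime G hG w ρ σ' u z := by
  unfold recvTime
  congr 1
  apply List.map_congr_left
  intro d hd
  have : d.toProd.2 ∈ (tPath G hG u z).support.tail := by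
    rw [← Walk.map_snd_darts]
    exact List.mem_map_of_mem hd
  rw [hσ _ this]

lemma tail_ne_start {u z : V} {t : V} (ht : t ∈ (tPath G hG u z).support.tail) :
    t ≠ u := by
  intro h
  have hnd := (tPath_isPath hG u z).support_nodup
  rw [Walk.support_eq_cons] at hnd
  exact (List.nodup_cons.1 hnd).1 (h ▸ ht)

lemma tail_mem_support {u z : V} {t : V} (ht : t ∈ (tPath G hG u z).support.tail) :
    t ∈ (tPath G hG u z).support := List.mem_of_mem_tail ht

omit hG in
/-- Pigeonhole: an injective slot assignment with all slots `≥ 1` must give some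
index `l ≤ k` a slot `≥ k+1`. -/
lemma pigeon {h : ℕ} (f : Fin h → ℕ) (hinj : Function.Injective f)
    (h1 : ∀ i, 1 ≤ f i) (k : Fin h) : ∃ l : Fin h, l ≤ k ∧ (k : ℕ) + 1 ≤ f l := by
  by_contra hcon
  push_neg at hcon
  have hg : ∀ i : Fin ((k : ℕ) + 1), f ⟨i, lt_of_le_of_lt (Nat.lt_succ_iff.1 i.isLt) k.isLt⟩
      ∈ Finset.Icc 1 (k : ℕ) := by
    intro i
    rw [Finset.mem_Icc]
    refine ⟨h1 _, ?_⟩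
    have := hcon ⟨i, lt_of_le_of_lt (Nat.lt_succ_iff.1 i.isLt) k.isLt⟩
      (by rw [Fin.le_def]; exact Nat.lt_succ_iff.1 i.isLt)
    omega
  have hcard := Finset.card_le_card_of_injOn
      (s := (Finset.univ : Finset (Fin ((k : ℕ) + 1)))) (t := Finset.Icc 1 (k : ℕ))
      (fun i => f ⟨i, lt_of_le_of_lt (Nat.lt_succ_iff.1 i.isLt) k.isLt⟩)
      (fun i _ => hg i)
      (fun a _ b _ hab => by
        have := hinj hab
        simpa [Fin.ext_iff] using congrArg Fin.val this)
  rw [Finset.card_univ, Fintype.card_fin, Nat.card_Icc] at hcard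
  omega

end Aux

/-- If the neighbors `u_1, …, u_h` of `x` are ordered so that
`w(x,u_k) + b_time(u_k, B(u_k,x))` is nonincreasing in `k`, then that contact
order is optimal and
`b_time(x,T) = max_{1 ≤ k ≤ h} (k·ρ + w(x,u_k) + b_time(u_k, B(u_k,x)))`. -/
theorem stmt7 {V : Type*} [Fintype V] [DecidableEq V] (G : SimpleGraph V) (hG : G.IsTree)
    (w : V → V → ℝ) (hsym : Wsymm w) (hpos : Wpos G w) (ρ : ℝ) (hρ : 0 < ρ)
    (x : V) (h : ℕ) (u : Fin h → V) (hinj : Function.Injective u)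
    (hrange : Set.range u = {v | G.Adj x v})
    (hsorted : ∀ k l : Fin h, k ≤ l →
      w x (u l) + bTime G hG w ρ (u l) (Bbr G (u l) x)
        ≤ w x (u k) + bTime G hG w ρ (u k) (Bbr G (u k) x)) :
    bTimeT G hG w ρ x
      = sSup (Set.range fun k : Fin h =>
          ((k : ℕ) + 1 : ℝ) * ρ + w x (u k) + bTime G hG w ρ (u k) (Bbr G (u k) x)) := by
  classical
  rcases Nat.eq_zero_or_pos h with hh | hh
  · -- degenerate case: `x` has no neighbors, so `V = {x}`
    subst hh
    have huniv : (Set.univ : Set V) = {x} := by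
      ext z
      simp only [Set.mem_univ, Set.mem_singleton_iff, true_iff]
      by_contra hz
      obtain ⟨s, hsa, _⟩ := exists_mem_Bbr hG (x := x) (z := z) hz
      have hs : s ∈ Set.range u := by rw [hrange]; exact hsa
      obtain ⟨k, -⟩ := hs
      exact k.elim0
    have hrng : (Set.range fun k : Fin 0 =>
        ((k : ℕ) + 1 : ℝ) * ρ + w x (u k) + bTime G hG w ρ (u k) (Bbr G (u k) x)) = ∅ := by
      simp
    rw [hrng, Real.sSup_empty]
    have hset : {m | ∃ σ, Valid G hG σ x Set.univ ∧
        m = sSup ((recvTime G hG w ρ σ x) '' Set.univ)} = {0} := by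
      ext m
      simp only [Set.mem_setOf_eq, Set.mem_singleton_iff]
      constructor
      · rintro ⟨σ, -, rfl⟩
        rw [huniv, Set.image_singleton, recvTime_self hG, csSup_singleton]
      · rintro rfl
        exact ⟨_, valid_exists hG x Set.univ, by
          rw [huniv, Set.image_singleton, recvTime_self hG, csSup_singleton]⟩
    rw [bTimeT, bTime, hset, csInf_singleton]
  · -- main case: `x` has `h ≥ 1` neighbors
    have hFinNe : Nonempty (Fin h) := ⟨⟨0, hh⟩⟩
    have hadj : ∀ k, G.Adj x (u k) := fun k => by
      have hk : u k ∈ Set.range u := ⟨k, rfl⟩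
      rwa [hrange] at hk
    set B : Fin h → Set V := fun k => Bbr G (u k) x with hB
    set F : Fin h → ℝ := fun k =>
      ((k : ℕ) + 1 : ℝ) * ρ + w x (u k) + bTime G hG w ρ (u k) (B k) with hF
    have hFk : ∀ k, F k = ((k : ℕ) + 1 : ℝ) * ρ + w x (u k)
        + bTime G hG w ρ (u k) (B k) := fun k => rfl
    have hFbdd : BddAbove (Set.range F) := (Set.finite_range F).bddAbove
    have hFne : (Set.range F).Nonempty := Set.range_nonempty F
    have hBmem : ∀ k, u k ∈ B k := fun k => mem_Bbr_self hG (hadj k)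
    have hxB : ∀ k, x ∉ B k := fun k => not_x_mem_Bbr hG (hadj k)
    have hFnonneg : ∀ k, 0 ≤ F k := fun k => by
      have h1 : 0 < w x (u k) := hpos x (u k) (hadj k)
      have h2 : 0 ≤ bTime G hG w ρ (u k) (B k) := bTime_nonneg hG w ρ _ _ (hBmem k)
      have h3 : (0:ℝ) < (((k:ℕ):ℝ)+1) * ρ := by positivity
      rw [hFk]; linarith
    have hM0 : 0 ≤ sSup (Set.range F) :=
      le_trans (hFnonneg ⟨0, hh⟩) (le_csSup hFbdd ⟨_, rfl⟩)
    have hdisj : ∀ {k l : Fin h} {z : V}, z ∈ B k → z ∈ B l → k = l := by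
      intro k l z hk hl
      by_contra hkl
      exact Bbr_disjoint hG (hadj k) (hadj l) (fun e => hkl (hinj e)) hk hl
    have hparx : ∀ k, parent G hG x (u k) = x := fun k => parent_of_adj hG (hadj k)
    have hparB : ∀ {k : Fin h} {z : V}, z ∈ B k → z ≠ u k →
        parent G hG x z = parent G hG (u k) z ∧ parent G hG (u k) z ∈ B k :=
      fun hk hz => ⟨parent_eq_of_mem hG (hadj _) hk hz, parent_mem_Bbr hG (hadj _) hk⟩
    have hcover : ∀ z : V, z ≠ x → ∃ k, z ∈ B k := by
      intro z hz
      obtain ⟨s, hsa, hsz⟩ := exists_mem_Bbr hG hz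
      have hs : s ∈ Set.range u := by rw [hrange]; exact hsa
      obtain ⟨k, rfl⟩ := hs
      exact ⟨k, hsz⟩
    rw [bTimeT]
    refine le_antisymm ?hle ?hge
    case hge =>
      -- sSup (range F) ≤ bTime x univ
      rw [bTime]
      refine le_csInf ⟨_, ⟨_, valid_exists hG x Set.univ, rfl⟩⟩ ?_
      rintro m ⟨σ, hσ, rfl⟩
      apply csSup_le hFne
      rintro _ ⟨k, rfl⟩
      have hbddu : BddAbove ((recvTime G hG w ρ σ x) '' Set.univ) := (Set.toFinite _).bddAbove
      have hinj' : Function.Injective (fun i => σ (u i)) := by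
        intro i j hij
        by_contra hne
        exact hσ.2 (u i) trivial (u j) trivial
          (Ne.symm (G.ne_of_adj (hadj i))) (Ne.symm (G.ne_of_adj (hadj j)))
          (fun e => hne (hinj e))
          ((hparx i).trans (hparx j).symm) hij
      have h1' : ∀ i, 1 ≤ σ (u i) := fun i =>
        hσ.1 (u i) trivial (Ne.symm (G.ne_of_adj (hadj i)))
      obtain ⟨l, hlk, hslot⟩ := pigeon (fun i => σ (u i)) hinj' h1' k
      have hc := hsorted l k hlk
      have hvl := Valid_restrict hG σ (hadj l) hσ
      have hble := bTime_le hG w ρ (hBmem l) hvl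
      have hslotR : ((k:ℕ):ℝ) + 1 ≤ (σ (u l) : ℝ) := by exact_mod_cast hslot
      have hmul : (((k:ℕ):ℝ) + 1) * ρ ≤ (σ (u l) : ℝ) * ρ :=
        mul_le_mul_of_nonneg_right hslotR hρ.le
      have hkey : sSup ((recvTime G hG w ρ σ (u l)) '' B l)
          ≤ sSup ((recvTime G hG w ρ σ x) '' Set.univ)
            - ((σ (u l) : ℝ) * ρ + w x (u l)) := by
        refine csSup_le ⟨_, ⟨_, hBmem l, rfl⟩⟩ ?_
        rintro _ ⟨z, hzB, rfl⟩
        have hrc := recvTime_cons hG w ρ σ (hadj l) hzB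
        have hle : recvTime G hG w ρ σ x z
            ≤ sSup ((recvTime G hG w ρ σ x) '' Set.univ) :=
          le_csSup hbddu ⟨z, trivial, rfl⟩
        linarith
      rw [hFk]
      linarith
    case hle =>
      -- bTime x univ ≤ sSup (range F)
      by_contra hab
      push_neg at hab
      set ε : ℝ := (bTime G hG w ρ x Set.univ - sSup (Set.range F)) / 2 with hεdef
      have hε : 0 < ε := by rw [hεdef]; linarith
      have hgoal : bTime G hG w ρ x Set.univ ≤ sSup (Set.range F) + ε := by
        choose σs hσs hsup using fun k => bTime_approx hG w ρ (u k) (B k) (hBmem k) hε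
        set σ : V → ℕ := fun z =>
          if hz : ∃ k, z = u k then (hz.choose : ℕ) + 1
          else if hz' : ∃ k, z ∈ B k then σs hz'.choose z else 0 with hσdef
        have key1 : ∀ k, σ (u k) = (k : ℕ) + 1 := by
          intro k
          have he : ∃ j, u k = u j := ⟨k, rfl⟩
          have hek : k = he.choose := hinj he.choose_spec
          simp only [hσdef]
          rw [dif_pos he, ← hek]
        have key2 : ∀ (k : Fin h) (z : V), z ∈ B k → z ≠ u k → σ z = σs k z := by
          intro k z hzB hzu
          have hnu : ¬∃ j, z = u j := by
            rintro ⟨j, rfl⟩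
            have hjk : j = k := hdisj (hBmem j) hzB
            exact hzu (by rw [hjk])
          have he' : ∃ j, z ∈ B j := ⟨k, hzB⟩
          have hck : he'.choose = k := hdisj he'.choose_spec hzB
          simp only [hσdef]
          rw [dif_neg hnu, dif_pos he', hck]
        have hvalid : Valid G hG σ x Set.univ := by
          constructor
          · intro z _ hzx'
            by_cases hzu : ∃ j, z = u j
            · obtain ⟨j, rfl⟩ := hzu; rw [key1 j]; omega
            · obtain ⟨k, hk⟩ := hcover z hzx'
              have hzuk : z ≠ u k := fun e => hzu ⟨k, e⟩
              rw [key2 k z hk hzuk]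
              exact (hσs k).1 z hk hzuk
          · intro z₁ _ z₂ _ h₁ h₂ hne hpar
            obtain ⟨k₁, hk₁⟩ := hcover z₁ h₁
            obtain ⟨k₂, hk₂⟩ := hcover z₂ h₂
            by_cases e₁ : ∃ j, z₁ = u j <;> by_cases e₂ : ∃ j, z₂ = u j
            · obtain ⟨i, rfl⟩ := e₁; obtain ⟨j, rfl⟩ := e₂
              rw [key1, key1]
              intro hcc
              have hij : (i:ℕ) = (j:ℕ) := by omega
              exact hne (congrArg u (Fin.val_injective hij))
            · obtain ⟨i, rfl⟩ := e₁
              exfalso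
              have hz₂u : z₂ ≠ u k₂ := fun e => e₂ ⟨k₂, e⟩
              have hp₂ := hparB hk₂ hz₂u
              have hxp : x = parent G hG (u k₂) z₂ :=
                (hparx i).symm.trans (hpar.trans hp₂.1)
              exact hxB k₂ (by rw [hxp]; exact hp₂.2)
            · obtain ⟨j, rfl⟩ := e₂
              exfalso
              have hz₁u : z₁ ≠ u k₁ := fun e => e₁ ⟨k₁, e⟩
              have hp₁ := hparB hk₁ hz₁u
              have hxp : x = parent G hG (u k₁) z₁ :=
                (hparx j).symm.trans (hpar.symm.trans hp₁.1)
              exact hxB k₁ (by rw [hxp]; exact hp₁.2)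
            · have hz₁u : z₁ ≠ u k₁ := fun e => e₁ ⟨k₁, e⟩
              have hz₂u : z₂ ≠ u k₂ := fun e => e₂ ⟨k₂, e⟩
              have hp₁ := hparB hk₁ hz₁u
              have hp₂ := hparB hk₂ hz₂u
              have hkk : k₁ = k₂ := by
                apply hdisj (z := parent G hG x z₁)
                · rw [hp₁.1]; exact hp₁.2
                · rw [hpar, hp₂.1]; exact hp₂.2
              subst hkk
              rw [key2 k₁ z₁ hk₁ hz₁u, key2 k₁ z₂ hk₂ hz₂u]
              apply (hσs k₁).2 z₁ hk₁ z₂ hk₂ hz₁u hz₂u hne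
              rw [← hp₁.1, ← hp₂.1, hpar]
        refine le_trans (bTime_le hG w ρ (Set.mem_univ x) hvalid) ?_
        refine csSup_le ⟨_, ⟨x, trivial, rfl⟩⟩ ?_
        rintro _ ⟨z, -, rfl⟩
        by_cases hzx' : z = x
        · subst hzx'
          rw [recvTime_self hG]
          linarith
        · obtain ⟨k, hk⟩ := hcover z hzx'
          have hrc := recvTime_cons hG w ρ σ (hadj k) hk
          have hcongr : recvTime G hG w ρ σ (u k) z
              = recvTime G hG w ρ (σs k) (u k) z := by
            apply recvTime_congr
            intro t ht
            have htB : t ∈ B k :=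
              support_subset_Bbr hG (hadj k) hk t (tail_mem_support hG ht)
            have htu : t ≠ u k := tail_ne_start hG ht
            exact key2 k t htB htu
          have h1 : recvTime G hG w ρ (σs k) (u k) z
              ≤ sSup ((recvTime G hG w ρ (σs k) (u k)) '' B k) :=
            le_csSup (Set.toFinite _).bddAbove ⟨z, hk, rfl⟩
          have h2 := hsup k
          have h3 : F k ≤ sSup (Set.range F) := le_csSup hFbdd ⟨k, rfl⟩
          have hc4 : ((σ (u k) : ℕ) : ℝ) = ((k:ℕ):ℝ) + 1 := by
            rw [key1 k]; push_cast; ring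
          rw [hc4] at hrc
          rw [hFk] at h3
          linarith
      rw [hεdef] at hgoal
      linarith

end Postal
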